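/- (Rayleigh and double-Rayleigh CDF) Let γ̄ > 0, 0 < α < 1 and γ > 0. Then ∫₀^∞ e^{-γ/((1 - α(1 - x)) γ̄)} e^{-x} dx = e^{(1-α)/α} Γ(1, (1-α)/α, γ/(α γ̄)); consequently the CDF of the RDR SNR distribution is F(γ) = 1 - e^{(1-α)/α} Γ(1, (1-α)/α, γ/(α γ̄)). -/

import Mathlib

open MeasureTheory Real

/-- Generalized incomplete gamma function `Γ(a, x, b) = ∫ₓ^∞ t^{a-1} e^{-t} e^{-b/t} dt`. -/
noncomputable def genGamma (a x b : ℝ) : ℝ :=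
  ∫ t in Set.Ioi x, t ^ (a - 1) * Real.exp (-t) * Real.exp (-b / t)

/-- **Rayleigh and double-Rayleigh (RDR) CDF.** For `γ̄ > 0`, `0 < α < 1` and `γ > 0`, the
exponential mixture of Rayleigh complementary CDFs satisfies
`∫₀^∞ e^{-γ/((1-α(1-x))γ̄)} e^{-x} dx = e^{(1-α)/α} Γ(1, (1-α)/α, γ/(αγ̄))`;
consequently the CDF of the RDR SNR distribution (the exponential mixture of the Rayleigh
CDFs `1 - e^{-γ/γ̄ₓ}`) equals `1 - e^{(1-α)/α} Γ(1, (1-α)/α, γ/(αγ̄))`. -/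
theorem rdr_cdf (γbar α γ : ℝ) (hγbar : 0 < γbar) (hα0 : 0 < α) (hα1 : α < 1)
    (hγ : 0 < γ) :
    (∫ x in Set.Ioi (0 : ℝ),
        Real.exp (-γ / ((1 - α * (1 - x)) * γbar)) * Real.exp (-x)
      = Real.exp ((1 - α) / α) * genGamma 1 ((1 - α) / α) (γ / (α * γbar))) ∧
    (∫ x in Set.Ioi (0 : ℝ),
        (1 - Real.exp (-γ / ((1 - α * (1 - x)) * γbar))) * Real.exp (-x)
      = 1 - Real.exp ((1 - α) / α) * genGamma 1 ((1 - α) / α) (γ / (α * γbar))) := by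
  set c : ℝ := (1 - α) / α with hc
  set b : ℝ := γ / (α * γbar) with hb
  have hα : (0:ℝ) < 1 - α := by linarith
  -- genGamma with a = 1 simplifies
  have hgen : genGamma 1 c b = ∫ t in Set.Ioi c, Real.exp (-t) * Real.exp (-b / t) := by
    unfold genGamma
    norm_num
  -- shift of the integral
  have hshift : (∫ x in Set.Ioi (0:ℝ), Real.exp (-(x + c)) * Real.exp (-b / (x + c)))
      = ∫ t in Set.Ioi c, Real.exp (-t) * Real.exp (-b / t) := by
    have := (measurePreserving_add_right (volume : Measure ℝ) c).setIntegral_preimage_emb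
      (measurableEmbedding_addRight c)
      (fun t => Real.exp (-t) * Real.exp (-b / t)) (Set.Ioi c)
    simpa using this
  -- pointwise identity on Ioi 0
  have hpt : ∀ x ∈ Set.Ioi (0:ℝ),
      Real.exp c * (Real.exp (-(x + c)) * Real.exp (-b / (x + c)))
        = Real.exp (-γ / ((1 - α * (1 - x)) * γbar)) * Real.exp (-x) := by
    intro x hx
    have hx0 : (0:ℝ) < x := hx
    have hd : (0:ℝ) < 1 - α * (1 - x) := by nlinarith
    have hxc : x + c = (1 - α * (1 - x)) / α := by
      rw [hc]; field_simp; ring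
    have harg : -b / (x + c) = -γ / ((1 - α * (1 - x)) * γbar) := by
      rw [hxc, hb]
      field_simp
    rw [harg, ← mul_assoc, ← Real.exp_add, show c + -(x + c) = -x by ring]
    ring
  have hmeas : MeasurableSet (Set.Ioi (0:ℝ)) := measurableSet_Ioi
  have part1 : (∫ x in Set.Ioi (0 : ℝ),
      Real.exp (-γ / ((1 - α * (1 - x)) * γbar)) * Real.exp (-x))
      = Real.exp c * genGamma 1 c b := by
    rw [hgen, ← hshift, ← integral_const_mul]
    exact (setIntegral_congr_fun hmeas hpt).symm
  refine ⟨part1, ?_⟩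
  -- integrability
  have hexp : IntegrableOn (fun x => Real.exp (-x)) (Set.Ioi (0:ℝ)) := by
    simpa using exp_neg_integrableOn_Ioi 0 one_pos
  have hint : IntegrableOn
      (fun x => Real.exp (-γ / ((1 - α * (1 - x)) * γbar)) * Real.exp (-x))
      (Set.Ioi (0:ℝ)) := by
    refine hexp.mono' ?_ ?_
    · exact Measurable.aestronglyMeasurable (by fun_prop)
    · filter_upwards [ae_restrict_mem hmeas] with x hx
      have hx0 : (0:ℝ) < x := hx
      have hd : (0:ℝ) < 1 - α * (1 - x) := by nlinarith
      have h1 : Real.exp (-γ / ((1 - α * (1 - x)) * γbar)) ≤ 1 := by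
        apply Real.exp_le_one_iff.mpr
        apply div_nonpos_of_nonpos_of_nonneg (by linarith) (by positivity)
      have h2 : (0:ℝ) < Real.exp (-x) := Real.exp_pos _
      rw [Real.norm_eq_abs, abs_of_pos (by positivity)]
      nlinarith [Real.exp_pos (-γ / ((1 - α * (1 - x)) * γbar))]
  have hsub : (∫ x in Set.Ioi (0 : ℝ),
      (1 - Real.exp (-γ / ((1 - α * (1 - x)) * γbar))) * Real.exp (-x))
      = (∫ x in Set.Ioi (0:ℝ), Real.exp (-x)) -
        ∫ x in Set.Ioi (0 : ℝ),
          Real.exp (-γ / ((1 - α * (1 - x)) * γbar)) * Real.exp (-x) := by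
    rw [← integral_sub hexp hint]
    congr 1 with x
    ring
  rw [hsub, integral_exp_neg_Ioi_zero, part1]
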